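/- arXiv:1802.05699 — 8 statements merged into one kernel-verified Lean document; each statement's English description precedes it below -/
import Mathlib

section
/- Let X be a real Hilbert space, x* ∈ X, δ > 0, and g : X → X a map with g(x*) = 0 that is locally strongly monotone with constant γ > 0 and locally Lipschitz continuous with constant L > 0 on the open ball B_δ(x*). Then there exists ε > 0 such that for every y ∈ X with ‖y‖ ≤ ε, the equation g(x) = y has a unique solution x ∈ B_δ(x*); moreover, if g(x₁) = y₁ and g(x₂) = y₂ with x₁, x₂ ∈ B_δ(x*), then ‖x₁ − x₂‖ ≤ γ⁻¹‖y₁ − y₂‖, i.e., the local solution map y ↦ x is Lipschitz continuous with constant 1/γ. -/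
open RealInnerProductSpace

/-- Local version of Zarantonello's lemma, local invertibility part: a locally strongly
monotone and locally Lipschitz map with a zero at `xstar` is locally invertible around `0`,
with Lipschitz continuous local inverse (Lipschitz constant `1/γ`). -/
theorem zarantonello_local_invertibility
    {X : Type*} [NormedAddCommGroup X] [InnerProductSpace ℝ X] [CompleteSpace X]
    (g : X → X) (xstar : X) (δ : ℝ) (hδ : 0 < δ)
    (γ L : ℝ) (hγ : 0 < γ) (hL : 0 < L)
    (hroot : g xstar = 0)
    (hmono : ∀ x ∈ Metric.ball xstar δ, ∀ y ∈ Metric.ball xstar δ,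
      γ * ‖x - y‖ ^ 2 ≤ ⟪g x - g y, x - y⟫)
    (hlip : ∀ x ∈ Metric.ball xstar δ, ∀ y ∈ Metric.ball xstar δ,
      ‖g x - g y‖ ≤ L * ‖x - y‖) :
    (∃ ε > 0, ∀ y : X, ‖y‖ ≤ ε → ∃! x, x ∈ Metric.ball xstar δ ∧ g x = y) ∧
    (∀ x₁ ∈ Metric.ball xstar δ, ∀ x₂ ∈ Metric.ball xstar δ,
      ∀ y₁ y₂ : X, g x₁ = y₁ → g x₂ = y₂ → ‖x₁ - x₂‖ ≤ γ⁻¹ * ‖y₁ - y₂‖) := by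
  -- Lipschitz continuity of the inverse
  have lipconc : ∀ x₁ ∈ Metric.ball xstar δ, ∀ x₂ ∈ Metric.ball xstar δ,
      ∀ y₁ y₂ : X, g x₁ = y₁ → g x₂ = y₂ → ‖x₁ - x₂‖ ≤ γ⁻¹ * ‖y₁ - y₂‖ := by
    intro x₁ h₁ x₂ h₂ y₁ y₂ e₁ e₂
    subst e₁; subst e₂
    have h := hmono x₁ h₁ x₂ h₂
    have hcs := real_inner_le_norm (g x₁ - g x₂) (x₁ - x₂)
    rcases eq_or_ne x₁ x₂ with rfl | hne
    · simp
    · have hpos : 0 < ‖x₁ - x₂‖ := by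
        rw [norm_pos_iff]; exact sub_ne_zero.mpr hne
      rw [le_inv_mul_iff₀ hγ]
      nlinarith
  refine ⟨?_, lipconc⟩
  -- setup constants
  set γ' : ℝ := min γ L with hγ'def
  have hγ'0 : 0 < γ' := lt_min hγ hL
  have hγ'L : γ' ≤ L := min_le_right _ _
  have hmono' : ∀ x ∈ Metric.ball xstar δ, ∀ y ∈ Metric.ball xstar δ,
      γ' * ‖x - y‖ ^ 2 ≤ ⟪g x - g y, x - y⟫ := by
    intro x hx y hy
    refine le_trans ?_ (hmono x hx y hy)
    have : γ' ≤ γ := min_le_left _ _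
    nlinarith [sq_nonneg ‖x - y‖]
  set t : ℝ := γ' / L ^ 2 with htdef
  have ht : 0 < t := by positivity
  set c : ℝ := 1 - γ' ^ 2 / L ^ 2 with hcdef
  have hc0 : 0 ≤ c := by
    rw [hcdef, sub_nonneg, div_le_one (by positivity)]
    nlinarith
  have hc1 : c < 1 := by
    rw [hcdef]
    have : 0 < γ' ^ 2 / L ^ 2 := by positivity
    linarith
  set κr : ℝ := Real.sqrt c with hκdef
  have hκ0 : 0 ≤ κr := Real.sqrt_nonneg c
  have hκ1 : κr < 1 := by
    rw [hκdef, show (1:ℝ) = Real.sqrt 1 by simp]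
    exact Real.sqrt_lt_sqrt hc0 (by simpa using hc1)
  -- key contraction estimate
  have key : ∀ v : X, ∀ x ∈ Metric.ball xstar δ, ∀ x' ∈ Metric.ball xstar δ,
      ‖(x - t • (g x - v)) - (x' - t • (g x' - v))‖ ≤ κr * ‖x - x'‖ := by
    intro v x hx x' hx'
    have hrw : (x - t • (g x - v)) - (x' - t • (g x' - v))
        = (x - x') - t • (g x - g x') := by
      rw [smul_sub, smul_sub, smul_sub]; abel
    rw [hrw]
    have expand := norm_sub_sq_real (x - x') (t • (g x - g x'))
    have hin : ⟪x - x', t • (g x - g x')⟫ = t * ⟪g x - g x', x - x'⟫ := by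
      rw [real_inner_smul_right, real_inner_comm]
    have hm := hmono' x hx x' hx'
    have hl := hlip x hx x' hx'
    have hnorm : ‖t • (g x - g x')‖ = t * ‖g x - g x'‖ := by
      rw [norm_smul, Real.norm_of_nonneg ht.le]
    have hv2 : ‖g x - g x'‖ ^ 2 ≤ L ^ 2 * ‖x - x'‖ ^ 2 := by
      nlinarith [norm_nonneg (g x - g x'), norm_nonneg (x - x')]
    have hid : 1 - 2 * t * γ' + t ^ 2 * L ^ 2 = c := by
      rw [htdef, hcdef]; field_simp; ring
    have hsq : ‖(x - x') - t • (g x - g x')‖ ^ 2 ≤ c * ‖x - x'‖ ^ 2 := by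
      have h1 : t * (γ' * ‖x - x'‖ ^ 2) ≤ t * ⟪g x - g x', x - x'⟫ :=
        mul_le_mul_of_nonneg_left hm ht.le
      have h2 : t ^ 2 * ‖g x - g x'‖ ^ 2 ≤ t ^ 2 * (L ^ 2 * ‖x - x'‖ ^ 2) :=
        mul_le_mul_of_nonneg_left hv2 (by positivity)
      rw [hin, hnorm, mul_pow] at expand
      rw [expand, ← hid]
      nlinarith [h1, h2]
    calc ‖(x - x') - t • (g x - g x')‖
        = Real.sqrt (‖(x - x') - t • (g x - g x')‖ ^ 2) := by
          rw [Real.sqrt_sq (norm_nonneg _)]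
      _ ≤ Real.sqrt (c * ‖x - x'‖ ^ 2) := Real.sqrt_le_sqrt hsq
      _ = κr * ‖x - x'‖ := by
          rw [Real.sqrt_mul hc0, Real.sqrt_sq (norm_nonneg _), hκdef]
  -- choice of ε
  refine ⟨(1 - κr) * δ / (2 * t), div_pos (mul_pos (by linarith) hδ) (by positivity), ?_⟩
  intro y hy
  -- the closed ball as a complete metric space
  set K : Set X := Metric.closedBall xstar (δ / 2) with hKdef
  have hKsub : K ⊆ Metric.ball xstar δ :=
    Metric.closedBall_subset_ball (by linarith)
  haveI : Nonempty K := ⟨⟨xstar, Metric.mem_closedBall_self (by linarith)⟩⟩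
  haveI : CompleteSpace K := Metric.isClosed_closedBall.completeSpace_coe
  -- contraction map
  have hmaps : ∀ x : X, x ∈ K → x - t • (g x - y) ∈ K := by
    intro x hxK
    have hx : x ∈ Metric.ball xstar δ := hKsub hxK
    have hstar : xstar ∈ Metric.ball xstar δ := Metric.mem_ball_self hδ
    have h1 : ‖(x - t • (g x - y)) - (xstar - t • (g xstar - y))‖ ≤ κr * ‖x - xstar‖ :=
      key y x hx xstar hstar
    have h2 : ‖(xstar - t • (g xstar - y)) - xstar‖ = t * ‖y‖ := by
      rw [hroot]
      simp [norm_smul, Real.norm_of_nonneg ht.le]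
    have hxd : ‖x - xstar‖ ≤ δ / 2 := by
      rw [← dist_eq_norm]; exact Metric.mem_closedBall.mp hxK
    have htri : ‖(x - t • (g x - y)) - xstar‖
        ≤ ‖(x - t • (g x - y)) - (xstar - t • (g xstar - y))‖
          + ‖(xstar - t • (g xstar - y)) - xstar‖ := by
      have := dist_triangle (x - t • (g x - y)) (xstar - t • (g xstar - y)) xstar
      simpa [dist_eq_norm] using this
    have hty : t * ‖y‖ ≤ (1 - κr) * δ / 2 := by
      have := mul_le_mul_of_nonneg_left hy ht.le
      calc t * ‖y‖ ≤ t * ((1 - κr) * δ / (2 * t)) := this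
        _ = (1 - κr) * δ / 2 := by field_simp
    have hκx : κr * ‖x - xstar‖ ≤ κr * (δ / 2) :=
      mul_le_mul_of_nonneg_left hxd hκ0
    rw [hKdef, Metric.mem_closedBall, dist_eq_norm]
    calc ‖(x - t • (g x - y)) - xstar‖ ≤ κr * (δ / 2) + (1 - κr) * δ / 2 := by
          linarith [htri, h1, hκx, hty]
      _ = δ / 2 := by ring
  set F : K → K := fun x => ⟨x.1 - t • (g x.1 - y), hmaps x.1 x.2⟩ with hFdef
  set κ : NNReal := ⟨κr, hκ0⟩ with hκndef
  have hcontr : ContractingWith κ F := by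
    constructor
    · exact_mod_cast hκ1
    · refine LipschitzWith.of_dist_le_mul fun a b => ?_
      rw [Subtype.dist_eq, Subtype.dist_eq, dist_eq_norm, dist_eq_norm]
      exact key y a.1 (hKsub a.2) b.1 (hKsub b.2)
  set xh : K := ContractingWith.fixedPoint F hcontr with hxhdef
  have hfix : F xh = xh := ContractingWith.fixedPoint_isFixedPt hcontr
  have hfix' : xh.1 - t • (g xh.1 - y) = xh.1 := congrArg Subtype.val hfix
  have hgy : g xh.1 = y := by
    have : t • (g xh.1 - y) = 0 := by
      have := sub_eq_iff_eq_add.mp hfix'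
      linear_combination (norm := abel) -this
    rcases smul_eq_zero.mp this with h | h
    · exact absurd h ht.ne'
    · exact sub_eq_zero.mp h
  have hxball : xh.1 ∈ Metric.ball xstar δ := hKsub xh.2
  refine ⟨xh.1, ⟨hxball, hgy⟩, ?_⟩
  rintro x' ⟨hx', hgx'⟩
  have h0 : ‖x' - xh.1‖ ≤ 0 := by
    simpa using lipconc x' hx' xh.1 hxball y y hgx' hgy
  exact norm_sub_eq_zero_iff.mp (le_antisymm h0 (norm_nonneg _))
end

section
/- Let X be a real Hilbert space, x* ∈ X, δ > 0, and g : X → X a map with g(x*) = 0 that is strongly monotone with constant γ > 0 and Lipschitz continuous with constant L > 0 on the closed ball of radius δ around x*. Let X_d ⊆ X be a finite-dimensional subspace with dist(x*, X_d) ≤ γδ/(γ + L). Then there exists x_d ∈ X_d with ‖x_d − x*‖ ≤ δ solving the Galerkin (projected) problem ⟨g(x_d), v⟩ = 0 for all v ∈ X_d; moreover x_d is the unique such solution in X_d intersected with the open ball B_δ(x*). -/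
open RealInnerProductSpace

section aux
variable {X : Type*} [NormedAddCommGroup X] [InnerProductSpace ℝ X]

/-- Radial retraction onto the closed ball of radius `R` centered at the origin. -/
noncomputable def ballRetract (R : ℝ) (a : X) : X :=
  if ‖a‖ ≤ R then a else (R / ‖a‖) • a

lemma ballRetract_norm_le {R : ℝ} (hR : 0 ≤ R) (a : X) : ‖ballRetract R a‖ ≤ R := by
  unfold ballRetract
  split_ifs with h
  · exact h
  · push_neg at h
    have ha : 0 < ‖a‖ := lt_of_le_of_lt hR h
    rw [norm_smul, Real.norm_eq_abs, abs_of_nonneg (div_nonneg hR ha.le),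
      div_mul_cancel₀ _ ha.ne']

lemma ballRetract_mem {R : ℝ} {Xd : Submodule ℝ X} {a : X} (ha : a ∈ Xd) :
    ballRetract R a ∈ Xd := by
  unfold ballRetract
  split_ifs with h
  · exact ha
  · exact Xd.smul_mem _ ha

lemma ballRetract_inner {R : ℝ} (hR : 0 ≤ R) (a d : X) (hd : ‖d‖ ≤ R) :
    ⟪a - ballRetract R a, d - ballRetract R a⟫ ≤ 0 := by
  unfold ballRetract
  split_ifs with h
  · simp
  · push_neg at h
    have ha : 0 < ‖a‖ := lt_of_le_of_lt hR h
    have h1 : a - (R / ‖a‖) • a = (1 - R / ‖a‖) • a := by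
      rw [sub_smul, one_smul]
    rw [h1, real_inner_smul_left, inner_sub_right, real_inner_smul_right,
      real_inner_self_eq_norm_sq]
    have hc : 0 ≤ 1 - R / ‖a‖ := by
      rw [sub_nonneg, div_le_one ha]; exact h.le
    have hcs : ⟪a, d⟫ ≤ ‖a‖ * ‖d‖ := real_inner_le_norm a d
    have : ⟪a, d⟫ - R / ‖a‖ * ‖a‖ ^ 2 ≤ 0 := by
      have : R / ‖a‖ * ‖a‖ ^ 2 = R * ‖a‖ := by field_simp
      rw [this]
      nlinarith [ha]
    nlinarith

lemma ballRetract_nonexpansive {R : ℝ} (hR : 0 ≤ R) (a b : X) :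
    ‖ballRetract R a - ballRetract R b‖ ≤ ‖a - b‖ := by
  set pa := ballRetract R a with hpa
  set pb := ballRetract R b with hpb
  have h1 : ⟪a - pa, pb - pa⟫ ≤ 0 := ballRetract_inner hR a pb (ballRetract_norm_le hR b)
  have h2 : ⟪b - pb, pa - pb⟫ ≤ 0 := ballRetract_inner hR b pa (ballRetract_norm_le hR a)
  have h1' : -⟪a - pa, pa - pb⟫ ≤ 0 := by
    rw [show pb - pa = -(pa - pb) by abel, inner_neg_right] at h1; linarith
  have e1 : ⟪a - b, pa - pb⟫ - ⟪pa - pb, pa - pb⟫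
      = ⟪a - pa, pa - pb⟫ - ⟪b - pb, pa - pb⟫ := by
    rw [← inner_sub_left, ← inner_sub_left]
    congr 1
    abel
  have key : ‖pa - pb‖ ^ 2 ≤ ⟪a - b, pa - pb⟫ := by
    rw [← real_inner_self_eq_norm_sq]
    linarith
  have hcs : ⟪a - b, pa - pb⟫ ≤ ‖a - b‖ * ‖pa - pb‖ := real_inner_le_norm _ _
  nlinarith [norm_nonneg (pa - pb), norm_nonneg (a - b)]

end aux

set_option maxHeartbeats 2000000 in
/-- Existence and local uniqueness of discrete Galerkin solutions for a strongly monotone,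
Lipschitz continuous map (Zarantonello's lemma, Galerkin part; proved via Brouwer's fixed
point theorem). -/
theorem galerkin_existence_uniqueness
    {X : Type*} [NormedAddCommGroup X] [InnerProductSpace ℝ X] [CompleteSpace X]
    (g : X → X) (xstar : X) (δ : ℝ) (hδ : 0 < δ)
    (γ L : ℝ) (hγ : 0 < γ) (hL : 0 < L)
    (hroot : g xstar = 0)
    (hmono : ∀ x ∈ Metric.closedBall xstar δ, ∀ y ∈ Metric.closedBall xstar δ,
      γ * ‖x - y‖ ^ 2 ≤ ⟪g x - g y, x - y⟫)
    (hlip : ∀ x ∈ Metric.closedBall xstar δ, ∀ y ∈ Metric.closedBall xstar δ,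
      ‖g x - g y‖ ≤ L * ‖x - y‖)
    (Xd : Submodule ℝ X) [FiniteDimensional ℝ Xd]
    (hdist : Metric.infDist xstar (Xd : Set X) ≤ γ * δ / (γ + L)) :
    ∃ xd ∈ Xd, ‖xd - xstar‖ ≤ δ ∧ (∀ v ∈ Xd, ⟪g xd, v⟫ = 0) ∧
      (∀ x ∈ Xd, x ∈ Metric.ball xstar δ → (∀ v ∈ Xd, ⟪g x, v⟫ = 0) → x = xd) := by
  classical
  have hγL : (0:ℝ) < γ + L := by linarith
  set ρ₀ : ℝ := γ * δ / (γ + L) with hρ₀def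
  set R : ℝ := L * δ / (γ + L) with hRdef
  have hρ₀pos : 0 < ρ₀ := div_pos (mul_pos hγ hδ) hγL
  have hRpos : 0 < R := div_pos (mul_pos hL hδ) hγL
  have hsum : ρ₀ + R = δ := by
    rw [hρ₀def, hRdef]
    field_simp
  -- orthogonal projection of xstar onto Xd
  set w : X := (Xd.orthogonalProjectionOnto xstar : X) with hwdef
  have hwmem : w ∈ Xd := (Xd.orthogonalProjectionOnto xstar).2
  have horth : ∀ v ∈ Xd, ⟪xstar - w, v⟫ = 0 := by
    intro v hv
    have h0 : ⟪v, xstar - w⟫ = 0 :=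
      (Submodule.mem_orthogonal Xd _).1 (Submodule.sub_starProjection_mem_orthogonal (K := Xd) xstar) v hv
    rw [real_inner_comm]
    exact h0
  -- P-inner compatibility
  have hP : ∀ (a v : X), v ∈ Xd → ⟪a, v⟫ = ⟪((Xd.orthogonalProjectionOnto a : X)), v⟫ := by
    intro a v hv
    have h0 : ⟪v, a - (Xd.orthogonalProjectionOnto a : X)⟫ = 0 :=
      (Submodule.mem_orthogonal Xd _).1 (Submodule.sub_starProjection_mem_orthogonal (K := Xd) a) v hv
    rw [inner_sub_right] at h0
    have h1 := real_inner_comm a v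
    have h2 := real_inner_comm ((Xd.orthogonalProjectionOnto a : X)) v
    linarith
  have hPnorm : ∀ a : X, ‖(Xd.orthogonalProjectionOnto a : X)‖ ≤ ‖a‖ := by
    intro a
    calc ‖(Xd.orthogonalProjectionOnto a : X)‖
        ≤ ‖Xd.orthogonalProjectionOnto‖ * ‖a‖ := (Xd.orthogonalProjectionOnto).le_opNorm a
      _ ≤ 1 * ‖a‖ := by
          exact mul_le_mul_of_nonneg_right (Submodule.orthogonalProjectionOnto_norm_le Xd) (norm_nonneg a)
      _ = ‖a‖ := one_mul _
  -- distance bound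
  have hρ : ‖xstar - w‖ ≤ ρ₀ := by
    refine le_trans ?_ hdist
    rw [Metric.infDist_eq_iInf]
    refine le_ciInf fun v => ?_
    rw [dist_eq_norm]
    have hvv : (v : X) ∈ Xd := v.2
    have pyth : ‖xstar - (v : X)‖ ^ 2 = ‖xstar - w‖ ^ 2 + ‖w - v‖ ^ 2 := by
      have hsplit : xstar - (v : X) = (xstar - w) + (w - v) := by abel
      rw [hsplit, norm_add_sq_real, horth _ (Xd.sub_mem hwmem hvv)]
      ring
    nlinarith [norm_nonneg (xstar - (v : X)), norm_nonneg (w - (v : X)),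
      norm_nonneg (xstar - w)]
  -- the set K
  set K : Set X := (Xd : Set X) ∩ Metric.closedBall w R with hKdef
  have hKclosed : IsClosed K :=
    (Submodule.closed_of_finiteDimensional Xd).inter Metric.isClosed_closedBall
  have hwK : w ∈ K := ⟨hwmem, by simp [Metric.mem_closedBall, le_of_lt hRpos]⟩
  have hKball : ∀ x ∈ K, x ∈ Metric.closedBall xstar δ := by
    intro x hx
    rw [Metric.mem_closedBall, dist_eq_norm]
    have h1 : ‖x - w‖ ≤ R := by
      have := hx.2
      rwa [Metric.mem_closedBall, dist_eq_norm] at this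
    calc ‖x - xstar‖ ≤ ‖x - w‖ + ‖w - xstar‖ := norm_sub_le_norm_sub_add_norm_sub _ _ _
      _ ≤ R + ρ₀ := by
          rw [norm_sub_rev w xstar]
          exact add_le_add h1 hρ
      _ = δ := by linarith
  haveI : Nonempty K := ⟨⟨w, hwK⟩⟩
  haveI : CompleteSpace K := hKclosed.completeSpace_coe
  -- step size and contraction factor
  set t : ℝ := γ / L ^ 2 with htdef
  have ht : 0 < t := div_pos hγ (by positivity)
  set k : ℝ := Real.sqrt (1 - γ ^ 2 / L ^ 2) with hkdef
  have hk1 : k < 1 := by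
    rcases le_or_gt (1 - γ ^ 2 / L ^ 2) 0 with h | h
    · rw [hkdef, Real.sqrt_eq_zero_of_nonpos h]
      exact one_pos
    · have hlt : 1 - γ ^ 2 / L ^ 2 < 1 := by
        have hpos : 0 < γ ^ 2 / L ^ 2 := by positivity
        linarith
      have : k < Real.sqrt 1 := by
        rw [hkdef]
        exact Real.sqrt_lt_sqrt h.le hlt
      simpa using this
  -- the iteration map
  have memT : ∀ x ∈ K, (x : X) - t • (Xd.orthogonalProjectionOnto (g x) : X) - w ∈ Xd := by
    intro x hx
    exact Xd.sub_mem (Xd.sub_mem hx.1 (Xd.smul_mem _ (Xd.orthogonalProjectionOnto (g x)).2)) hwmem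
  set F : K → K := fun x =>
    ⟨w + ballRetract R ((x : X) - t • (Xd.orthogonalProjectionOnto (g x) : X) - w), by
      constructor
      · exact Xd.add_mem hwmem (ballRetract_mem (memT x x.2))
      · rw [Metric.mem_closedBall, dist_eq_norm, add_sub_cancel_left]
        exact ballRetract_norm_le hRpos.le _⟩ with hFdef
  -- contraction estimate
  have hT : ∀ x y : K, ‖((x : X) - t • (Xd.orthogonalProjectionOnto (g x) : X))
      - ((y : X) - t • (Xd.orthogonalProjectionOnto (g y) : X))‖ ^ 2
      ≤ (1 - γ ^ 2 / L ^ 2) * ‖(x : X) - y‖ ^ 2 := by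
    intro x y
    set d : X := (x : X) - y with hddef
    set q : X := (Xd.orthogonalProjectionOnto (g x) : X) - (Xd.orthogonalProjectionOnto (g y) : X)
      with hqdef
    have hdXd : d ∈ Xd := Xd.sub_mem x.2.1 y.2.1
    have hxball := hKball x x.2
    have hyball := hKball y y.2
    have hinner : γ * ‖d‖ ^ 2 ≤ ⟪q, d⟫ := by
      have e1 : ⟪q, d⟫ = ⟪g x - g y, d⟫ := by
        rw [hqdef, inner_sub_left, inner_sub_left, ← hP (g x) d hdXd, ← hP (g y) d hdXd]
      rw [e1]
      exact hmono x hxball y hyball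
    have hqnorm : ‖q‖ ≤ L * ‖d‖ := by
      have e2 : q = (Xd.orthogonalProjectionOnto (g x - g y) : X) := by
        rw [hqdef, map_sub]
        rfl
      calc ‖q‖ = ‖(Xd.orthogonalProjectionOnto (g x - g y) : X)‖ := by rw [e2]
        _ ≤ ‖g x - g y‖ := hPnorm _
        _ ≤ L * ‖d‖ := hlip x hxball y hyball
    have hsplit : ((x : X) - t • (Xd.orthogonalProjectionOnto (g x) : X))
        - ((y : X) - t • (Xd.orthogonalProjectionOnto (g y) : X)) = d - t • q := by
      rw [hddef, hqdef, smul_sub]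
      abel
    rw [hsplit]
    have hexp : ‖d - t • q‖ ^ 2 = ‖d‖ ^ 2 - 2 * t * ⟪q, d⟫ + t ^ 2 * ‖q‖ ^ 2 := by
      rw [sub_eq_add_neg, norm_add_sq_real, inner_neg_right, real_inner_smul_right,
        norm_neg, norm_smul, Real.norm_eq_abs, abs_of_pos ht, mul_pow,
        real_inner_comm d q]
      ring
    rw [hexp]
    have hq2 : t ^ 2 * ‖q‖ ^ 2 ≤ t ^ 2 * (L * ‖d‖) ^ 2 := by
      apply mul_le_mul_of_nonneg_left _ (by positivity)
      exact pow_le_pow_left₀ (norm_nonneg q) hqnorm 2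
    have hteq : 1 - 2 * t * γ + t ^ 2 * L ^ 2 = 1 - γ ^ 2 / L ^ 2 := by
      rw [htdef]
      field_simp
      ring
    nlinarith [hinner, hq2, sq_nonneg ‖d‖, ht]
  have hFlip : ∀ x y : K, dist (F x) (F y) ≤ k * dist x y := by
    intro x y
    rw [Subtype.dist_eq, dist_eq_norm, Subtype.dist_eq, dist_eq_norm]
    have e3 : ((F x : X)) - ((F y : X))
        = ballRetract R ((x : X) - t • (Xd.orthogonalProjectionOnto (g x) : X) - w)
          - ballRetract R ((y : X) - t • (Xd.orthogonalProjectionOnto (g y) : X) - w) := by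
      show (w + _) - (w + _) = _
      abel
    rw [e3]
    calc ‖_ - _‖ ≤ ‖((x : X) - t • (Xd.orthogonalProjectionOnto (g x) : X) - w)
          - ((y : X) - t • (Xd.orthogonalProjectionOnto (g y) : X) - w)‖ :=
        ballRetract_nonexpansive hRpos.le _ _
      _ = ‖((x : X) - t • (Xd.orthogonalProjectionOnto (g x) : X))
          - ((y : X) - t • (Xd.orthogonalProjectionOnto (g y) : X))‖ := by
          congr 1
          abel
      _ ≤ k * ‖(x : X) - y‖ := by
          have h2 := hT x y
          have : ‖((x : X) - t • (Xd.orthogonalProjectionOnto (g x) : X))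
              - ((y : X) - t • (Xd.orthogonalProjectionOnto (g y) : X))‖
              = Real.sqrt (‖((x : X) - t • (Xd.orthogonalProjectionOnto (g x) : X))
              - ((y : X) - t • (Xd.orthogonalProjectionOnto (g y) : X))‖ ^ 2) := by
            rw [Real.sqrt_sq (norm_nonneg _)]
          rw [this]
          calc Real.sqrt _ ≤ Real.sqrt ((1 - γ ^ 2 / L ^ 2) * ‖(x : X) - y‖ ^ 2) :=
              Real.sqrt_le_sqrt h2
            _ = k * ‖(x : X) - y‖ := by
                rw [Real.sqrt_mul' _ (sq_nonneg _), Real.sqrt_sq (norm_nonneg _), hkdef]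
  set kNN : NNReal := ⟨k, Real.sqrt_nonneg _⟩ with hkNN
  have hcontr : ContractingWith kNN F := by
    constructor
    · rw [← NNReal.coe_lt_coe]
      exact hk1
    · exact LipschitzWith.of_dist_le_mul hFlip
  -- fixed point
  set u : K := hcontr.fixedPoint F with hudef
  have hfix : F u = u := hcontr.fixedPoint_isFixedPt
  set uX : X := (u : X) with huXdef
  have huXd : uX ∈ Xd := u.2.1
  have hub : ‖uX - w‖ ≤ R := by
    have := u.2.2
    rwa [Metric.mem_closedBall, dist_eq_norm] at this
  set m : X := (Xd.orthogonalProjectionOnto (g uX) : X) with hmdef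
  set z : X := uX - t • m - w with hzdef
  have hfix' : w + ballRetract R z = uX := congrArg Subtype.val hfix
  have huball : uX ∈ Metric.closedBall xstar δ := hKball uX u.2
  clear hfix hudef hFdef
  clear_value uX
  by_cases hcase : ‖z‖ ≤ R
  · -- the fixed point is an interior solution
    have hzz : ballRetract R z = z := by rw [ballRetract, if_pos hcase]
    rw [hzz, hzdef] at hfix'
    have hm0 : t • m = 0 := by
      have h4 : uX - t • m = uX := by
        have : w + (uX - t • m - w) = uX - t • m := by abel
        rw [this] at hfix'
        exact hfix'
      exact sub_eq_self.mp h4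
    have hm : m = 0 := by
      rcases smul_eq_zero.mp hm0 with h | h
      · exact absurd h ht.ne'
      · exact h
    have hsol : ∀ v ∈ Xd, ⟪g uX, v⟫ = 0 := by
      intro v hv
      rw [hP (g uX) v hv, ← hmdef, hm, inner_zero_left]
    refine ⟨uX, huXd, ?_, hsol, ?_⟩
    · rw [← dist_eq_norm]
      exact Metric.mem_closedBall.mp huball
    · -- uniqueness
      intro x hxXd hxball hxsol
      have hx' : x ∈ Metric.closedBall xstar δ := Metric.ball_subset_closedBall hxball
      have h5 : γ * ‖x - uX‖ ^ 2 ≤ ⟪g x - g uX, x - uX⟫ := hmono x hx' uX huball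
      have h6 : ⟪g x - g uX, x - uX⟫ = 0 := by
        rw [inner_sub_left, hxsol _ (Xd.sub_mem hxXd huXd), hsol _ (Xd.sub_mem hxXd huXd)]
        ring
      have h7 : ‖x - uX‖ ^ 2 ≤ 0 := by
        by_contra hpos
        push_neg at hpos
        have := mul_pos hγ hpos
        rw [h6] at h5
        linarith
      have h8 : ‖x - uX‖ ^ 2 = 0 := le_antisymm h7 (sq_nonneg _)
      have h9 : ‖x - uX‖ = 0 := by
        exact pow_eq_zero_iff two_ne_zero |>.mp h8
      exact norm_sub_eq_zero_iff.mp h9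
  · -- boundary case: impossible
    exfalso
    push_neg at hcase
    have hz0 : 0 < ‖z‖ := lt_trans hRpos hcase
    have hzz : ballRetract R z = (R / ‖z‖) • z := by
      rw [ballRetract, if_neg (not_le.mpr hcase)]
    rw [hzz] at hfix'
    have hun : uX - w = (R / ‖z‖) • z := by rw [← hfix']; abel
    have hnuw : ‖uX - w‖ = R := by
      rw [hun, norm_smul, Real.norm_eq_abs, abs_of_pos (div_pos hRpos hz0),
        div_mul_cancel₀ _ hz0.ne']
    have hzrep : z = (‖z‖ / R) • (uX - w) := by
      rw [hun, smul_smul]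
      rw [show ‖z‖ / R * (R / ‖z‖) = 1 by field_simp]
      rw [one_smul]
    have htm : t • m = (1 - ‖z‖ / R) • (uX - w) := by
      have h1 : t • m = (uX - w) - z := by rw [hzdef]; abel
      rw [h1, sub_smul, one_smul, ← hzrep]
    have hgu_uw : ⟪g uX, uX - w⟫ ≤ 0 := by
      have e8 : t * ⟪m, uX - w⟫ = (1 - ‖z‖ / R) * ‖uX - w‖ ^ 2 := by
        rw [← real_inner_smul_left, htm, real_inner_smul_left, real_inner_self_eq_norm_sq]
      have hfac : (1 - ‖z‖ / R) ≤ 0 := by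
        have h2 : 1 < ‖z‖ / R := (one_lt_div hRpos).mpr hcase
        linarith
      have hrhs : t * ⟪m, uX - w⟫ ≤ 0 := by
        rw [e8]
        exact mul_nonpos_of_nonpos_of_nonneg hfac (sq_nonneg _)
      have hm_le : ⟪m, uX - w⟫ ≤ 0 := by
        by_contra hc
        push_neg at hc
        exact absurd hrhs (not_le.mpr (mul_pos ht hc))
      rw [hP (g uX) _ (Xd.sub_mem huXd hwmem), ← hmdef]
      exact hm_le
    -- a priori estimate leading to contradiction
    set s : ℝ := ‖uX - xstar‖ with hsdef
    set ρ : ℝ := ‖xstar - w‖ with hρdef2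
    have hρnn : 0 ≤ ρ := norm_nonneg _
    have hsnn : 0 ≤ s := norm_nonneg _
    have hmono1 : γ * s ^ 2 ≤ ⟪g uX, uX - xstar⟫ := by
      have := hmono uX huball xstar (Metric.mem_closedBall_self hδ.le)
      rwa [hroot, sub_zero] at this
    have hsplit2 : ⟪g uX, uX - xstar⟫ = ⟪g uX, uX - w⟫ + ⟪g uX, w - xstar⟫ := by
      rw [← inner_add_right]
      congr 1
      abel
    have hgnorm : ‖g uX‖ ≤ L * s := by
      have := hlip uX huball xstar (Metric.mem_closedBall_self hδ.le)
      rwa [hroot, sub_zero] at this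
    have hend : ⟪g uX, w - xstar⟫ ≤ L * s * ρ := by
      calc ⟪g uX, w - xstar⟫ ≤ ‖g uX‖ * ‖w - xstar‖ := real_inner_le_norm _ _
        _ ≤ L * s * ρ := by
            rw [norm_sub_rev w xstar, ← hρdef2]
            exact mul_le_mul_of_nonneg_right hgnorm hρnn
    have hkey : γ * s ^ 2 ≤ L * s * ρ := by
      have := hmono1
      rw [hsplit2] at this
      linarith
    have pyth2 : s ^ 2 = R ^ 2 + ρ ^ 2 := by
      have hsplit3 : uX - xstar = (uX - w) + (w - xstar) := by abel
      have hzero : ⟪uX - w, w - xstar⟫ = 0 := by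
        rw [show w - xstar = -(xstar - w) by abel, inner_neg_right, real_inner_comm,
          horth _ (Xd.sub_mem huXd hwmem)]
        ring
      rw [hsdef, hsplit3, norm_add_sq_real, hzero, hnuw, norm_sub_rev w xstar, ← hρdef2]
      ring
    have hρle : ρ ≤ ρ₀ := hρ
    have hgR : γ * R = L * ρ₀ := by
      rw [hρ₀def, hRdef]
      field_simp
    -- derive contradiction
    have hs2pos : 0 < s ^ 2 := by nlinarith [sq_nonneg ρ, hRpos]
    have h1 : 0 ≤ L * s * ρ - γ * s ^ 2 := sub_nonneg.mpr hkey
    have h2 : 0 ≤ L * s * ρ + γ * s ^ 2 :=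
      add_nonneg (mul_nonneg (mul_nonneg hL.le hsnn) hρnn) (mul_nonneg hγ.le (sq_nonneg s))
    have h3 : 0 ≤ (L * s * ρ - γ * s ^ 2) * (L * s * ρ + γ * s ^ 2) := mul_nonneg h1 h2
    have hsq : γ ^ 2 * s ^ 2 * s ^ 2 ≤ L ^ 2 * ρ ^ 2 * s ^ 2 := by nlinarith [h3]
    have hsq2 : γ ^ 2 * s ^ 2 ≤ L ^ 2 * ρ ^ 2 :=
      le_of_mul_le_mul_right hsq hs2pos
    rw [pyth2] at hsq2
    have hρsq : ρ ^ 2 ≤ ρ₀ ^ 2 := by nlinarith [hρle, hρnn]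
    have hL2 : L ^ 2 * ρ ^ 2 ≤ L ^ 2 * ρ₀ ^ 2 :=
      mul_le_mul_of_nonneg_left hρsq (sq_nonneg L)
    have hgR2 : γ ^ 2 * R ^ 2 = L ^ 2 * ρ₀ ^ 2 := by
      have h00 : (γ * R) ^ 2 = (L * ρ₀) ^ 2 := by rw [hgR]
      linarith [h00, sq_nonneg (γ * R), sq_nonneg (L * ρ₀),
        (by ring : (γ * R) ^ 2 = γ ^ 2 * R ^ 2), (by ring : (L * ρ₀) ^ 2 = L ^ 2 * ρ₀ ^ 2)]
    have hsq3 : γ ^ 2 * R ^ 2 + γ ^ 2 * ρ ^ 2 ≤ L ^ 2 * ρ ^ 2 := by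
      linarith [hsq2, (by ring : γ ^ 2 * (R ^ 2 + ρ ^ 2) = γ ^ 2 * R ^ 2 + γ ^ 2 * ρ ^ 2)]
    have h10 : 0 ≤ γ ^ 2 * ρ ^ 2 := mul_nonneg (sq_nonneg γ) (sq_nonneg ρ)
    have h9 : γ ^ 2 * ρ ^ 2 ≤ 0 := by linarith
    have h11 : ρ ^ 2 = 0 := by
      rcases mul_eq_zero.mp (le_antisymm h9 h10) with h | h
      · exact absurd h (pow_ne_zero 2 hγ.ne')
      · exact h
    have h12 : γ ^ 2 * R ^ 2 ≤ 0 := by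
      have hz2 : L ^ 2 * ρ ^ 2 = 0 := by rw [h11, mul_zero]
      linarith
    have h13 : 0 < γ ^ 2 * R ^ 2 := mul_pos (pow_pos hγ 2) (pow_pos hRpos 2)
    linarith
end

section
/- Let V be a real vector space equipped with a norm ‖·‖_V and a seminorm ‖·‖_H, and let B : V → ℝ be a function (the quadratic form ψ ↦ ⟨ψ, (F − Λ₀)ψ⟩ of the shifted Fock operator). Suppose there are constants c > 0 and μ ≥ 0 (μ = Λ₀ + e, where e is the Gårding constant) such that B(ψ) + μ‖ψ‖_H² ≥ c‖ψ‖_V² for all ψ ∈ V, and a subset U ⊆ V and a constant ε₀ > 0 (the CAS-ext gap) such that B(ψ) ≥ ε₀‖ψ‖_H² for all ψ ∈ U. Then, with η := c·ε₀/(ε₀ + μ) > 0, one has B(ψ) ≥ η‖ψ‖_V² for all ψ ∈ U. -/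
/-- Core coercivity estimate (Lemma "H1"): a Gårding-type inequality for a quadratic form `B`
with respect to a norm `‖·‖` (the `H¹`-norm) and a seminorm `nH` (the `L²`-norm), together
with a spectral-gap estimate `B ψ ≥ ε₀ (nH ψ)²` on a subset `U` (the external space), yields
coercivity `B ψ ≥ η ‖ψ‖²` on `U` with the explicit constant `η = c·ε₀/(ε₀ + μ)`. -/
theorem garding_gap_coercivity
    {V : Type*} [NormedAddCommGroup V] [NormedSpace ℝ V]
    (nH : Seminorm ℝ V) (B : V → ℝ)
    (c μ : ℝ) (hc : 0 < c) (hμ : 0 ≤ μ)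
    (hgarding : ∀ ψ : V, c * ‖ψ‖ ^ 2 ≤ B ψ + μ * (nH ψ) ^ 2)
    (U : Set V) (ε₀ : ℝ) (hε₀ : 0 < ε₀)
    (hgap : ∀ ψ ∈ U, ε₀ * (nH ψ) ^ 2 ≤ B ψ) :
    0 < c * ε₀ / (ε₀ + μ) ∧ ∀ ψ ∈ U, (c * ε₀ / (ε₀ + μ)) * ‖ψ‖ ^ 2 ≤ B ψ := by
  have hden : 0 < ε₀ + μ := by linarith
  refine ⟨by positivity, fun ψ hψ => ?_⟩
  have h1 := hgarding ψ
  have h2 := hgap ψ hψ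
  have h3 : (nH ψ) ^ 2 ≤ B ψ / ε₀ := by
    rw [le_div_iff₀ hε₀]; linarith [h2]
  have h4 : c * ‖ψ‖ ^ 2 ≤ B ψ + μ * (B ψ / ε₀) := by
    have := mul_le_mul_of_nonneg_left h3 hμ
    linarith
  rw [div_mul_eq_mul_div, div_le_iff₀ hden]
  have : B ψ + μ * (B ψ / ε₀) = B ψ * (ε₀ + μ) / ε₀ := by field_simp
  rw [this, le_div_iff₀ hε₀] at h4
  nlinarith [h4]
end

section
/- Let A be a complete normed algebra (Banach algebra) over ℝ, H ∈ A, and let S be a closed subalgebra of A whose elements pairwise commute. Then the map g : S → A defined by g(T) = exp(−T) · H · exp(T) is Fréchet differentiable at every T ∈ S, with derivative given by (Dg(T))(U) = exp(−T) · (H·U − U·H) · exp(T) for U ∈ S. -/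
set_option synthInstance.maxHeartbeats 1000000
set_option maxHeartbeats 1000000

open NormedSpace

/-- Differentiability of the similarity-transformed Hamiltonian: if `S` is a closed
subalgebra of a real Banach algebra `A` whose elements pairwise commute, then
`T ↦ exp(−T)·H·exp(T)` is Fréchet differentiable at every `T ∈ S`, with derivative
`U ↦ exp(−T)·(H·U − U·H)·exp(T)`. -/
theorem hasFDerivAt_exp_conj
    {A : Type*} [NormedRing A] [NormedAlgebra ℝ A] [CompleteSpace A]
    (S : Subalgebra ℝ A) (hclosed : IsClosed (S : Set A))
    (hcommS : ∀ T U : S, T * U = U * T) (H : A) :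
    ∀ T : S, ∃ D : S →L[ℝ] A,
      HasFDerivAt (fun T : S => NormedSpace.exp (-(T : A)) * H * NormedSpace.exp (T : A))
        D T ∧
      ∀ U : S, D U
        = NormedSpace.exp (-(T : A)) * (H * (U : A) - (U : A) * H)
            * NormedSpace.exp (T : A) := by
  intro T
  letI nsS : NormedSpace ℝ S := inferInstance
  letI : NormedCommRing S := { (inferInstance : NormedRing S) with mul_comm := hcommS }
  haveI : CompleteSpace S := hclosed.completeSpace_coe
  letI : NormedAlgebra ℚ S := .restrictScalars ℚ ℝ S
  letI : NormedAlgebra ℚ A := .restrictScalars ℚ ℝ A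
  have key : ∀ x : S, exp (x : A) = ((exp x : S) : A) := fun x =>
    (map_exp S.val continuous_subtype_val x).symm
  let ι : S →L[ℝ] A := S.toSubmodule.subtypeL
  have h1 : HasFDerivAt (fun T : S => exp (-T))
      ((exp (-T) • (1 : S →L[ℝ] S)).comp (-(1 : S →L[ℝ] S))) T :=
    (@hasFDerivAt_exp ℝ S _ _ _ _ (-T)).comp T (hasFDerivAt_id T).neg
  have h2 : HasFDerivAt (fun T : S => exp T) (exp T • (1 : S →L[ℝ] S)) T :=
    @hasFDerivAt_exp ℝ S _ _ _ _ T
  have hf : HasFDerivAt (fun T : S => (ι (exp (-T)) : A))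
      (ι.comp ((exp (-T) • (1 : S →L[ℝ] S)).comp (-(1 : S →L[ℝ] S)))) T :=
    ι.hasFDerivAt.comp T h1
  have hg : HasFDerivAt (fun T : S => (ι (exp T) : A))
      (ι.comp (exp T • (1 : S →L[ℝ] S))) T := ι.hasFDerivAt.comp T h2
  have hfull := (hf.mul_const' H).mul' hg
  have heq : (fun T : S => exp (-(T : A)) * H * exp (T : A))
      = fun T : S => ι (exp (-T)) * H * ι (exp T) := by
    funext y
    have : -(y : A) = ((-y : S) : A) := by simp
    rw [this, key, key]
    rfl
  rw [heq]
  refine ⟨_, hfull, ?_⟩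
  intro U
  have hc : ∀ x y : S, (x : A) * (y : A) = (y : A) * (x : A) := fun x y => by
    have := congrArg (Subtype.val) (hcommS x y); simpa using this
  have e1 : -(T : A) = ((-T : S) : A) := by simp
  simp only [ContinuousLinearMap.add_apply, ContinuousLinearMap.smul_apply,
    ContinuousLinearMap.coe_comp', Function.comp_apply, ContinuousLinearMap.smulRight_apply,
    ContinuousLinearMap.neg_apply, ContinuousLinearMap.one_apply, smul_eq_mul,
    Submodule.subtypeL_apply, ι, e1, key]
  have hι : ∀ x : S, ι x = (x : A) := fun _ => rfl
  change ((exp (-T) : S) : A) * H * ((exp T * U : S) : A) + MulOpposite.op ((exp T : S) : A) •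
    MulOpposite.op H • ((exp (-T) * -U : S) : A) = _
  simp only [MulMemClass.coe_mul, NegMemClass.coe_neg, op_smul_eq_mul]
  rw [hc (exp T) U]
  noncomm_ring
end

section
/- Let K, N, k, n be natural numbers with 1 ≤ n ≤ N ≤ k < K, and let λ : {1, …, K} → ℝ be nondecreasing with ε₀ := λ(k+1) − λ(k) > 0. Set δ := (λ(k+1) + λ(k))/2. Let (A_j, I_j), j = 1, …, n, be pairs of indices with 1 ≤ I_j ≤ N and N + 1 ≤ A_j ≤ K, and assume that A_j ≥ k + 1 for at least one j (the excitation is 'external'). Define ε := Σ_{j=1}^{n} (λ(A_j) − λ(I_j)) and λ̄ := max_{1≤j≤n} λ(A_j) − δ. Then λ̄ ≤ ε and ε ≤ N·(1 + 2(δ − λ(1))/ε₀)·λ̄; in particular, C⁻¹·ε ≤ λ̄ ≤ ε with C := N·(1 + 2(δ − λ(1))/ε₀). -/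
/-- Comparability of the excitation energy of an external excitation with the maximal
virtual single-particle energy shifted by the gap midpoint (Lemma on ε_ν ∼ λ̄_ν):
`λ̄ ≤ ε ≤ N·(1 + 2(δ − λ(1))/ε₀)·λ̄` for any external excitation. -/
theorem external_excitation_energy_comparison
    (K N k n : ℕ) (hn : 1 ≤ n) (hnN : n ≤ N) (hNk : N ≤ k) (hkK : k < K)
    (lam : ℕ → ℝ) (hmono : ∀ i j, 1 ≤ i → i ≤ j → j ≤ K → lam i ≤ lam j)
    (hgap : 0 < lam (k + 1) - lam k)
    (A I : Fin n → ℕ)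
    (hI : ∀ j, 1 ≤ I j ∧ I j ≤ N) (hA : ∀ j, N + 1 ≤ A j ∧ A j ≤ K)
    (hext : ∃ j, k + 1 ≤ A j) :
    (Finset.univ.sup' (Finset.univ_nonempty_iff.mpr ⟨⟨0, hn⟩⟩) (fun j => lam (A j))
        - (lam (k + 1) + lam k) / 2)
      ≤ ∑ j, (lam (A j) - lam (I j)) ∧
    ∑ j, (lam (A j) - lam (I j))
      ≤ (N : ℝ) * (1 + 2 * ((lam (k + 1) + lam k) / 2 - lam 1) / (lam (k + 1) - lam k))
        * (Finset.univ.sup' (Finset.univ_nonempty_iff.mpr ⟨⟨0, hn⟩⟩) (fun j => lam (A j))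
            - (lam (k + 1) + lam k) / 2) := by
  set M := Finset.univ.sup' (Finset.univ_nonempty_iff.mpr ⟨⟨0, hn⟩⟩) (fun j => lam (A j))
    with hMdef
  have h1k : 1 ≤ k := le_trans (le_trans hn hnN) hNk
  obtain ⟨jm, -, hjm⟩ :=
    Finset.exists_mem_eq_sup' (Finset.univ_nonempty_iff.mpr ⟨⟨0, hn⟩⟩) (fun j => lam (A j))
  rw [← hMdef] at hjm
  have hAle : ∀ j, lam (A j) ≤ M := fun j => by rw [hMdef]; exact Finset.le_sup' (fun j => lam (A j)) (Finset.mem_univ j)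
  obtain ⟨j0, hj0⟩ := hext
  have hMge : lam (k + 1) ≤ M :=
    le_trans (hmono (k + 1) (A j0) (by omega) hj0 (hA j0).2) (hAle j0)
  have hIlam : ∀ j, lam 1 ≤ lam (I j) ∧ lam (I j) ≤ lam k := fun j =>
    ⟨hmono 1 (I j) le_rfl (hI j).1 (by have := (hI j).2; omega),
     hmono (I j) k (hI j).1 (le_trans (hI j).2 hNk) (by omega)⟩
  have hlam1k : lam 1 ≤ lam k := hmono 1 k le_rfl h1k (by omega)
  have hterm : ∀ j, 0 ≤ lam (A j) - lam (I j) := fun j =>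
    sub_nonneg.mpr (hmono (I j) (A j) (hI j).1
      (by have := (hI j).2; have := (hA j).1; omega) (hA j).2)
  set d : ℝ := (lam (k + 1) + lam k) / 2 with hd
  have hd1 : lam 1 ≤ d := by rw [hd]; linarith
  have hMd : (lam (k + 1) - lam k) / 2 ≤ M - d := by rw [hd]; linarith
  constructor
  · have hsum : lam (A jm) - lam (I jm) ≤ ∑ j, (lam (A j) - lam (I j)) :=
      Finset.single_le_sum (fun j _ => hterm j) (Finset.mem_univ jm)
    have h2 := (hIlam jm).2
    rw [hjm]
    have : lam (I jm) ≤ d := by rw [hd]; linarith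
    linarith
  · have h2 : ∑ j, (lam (A j) - lam (I j)) ≤ ∑ _j : Fin n, (M - lam 1) :=
      Finset.sum_le_sum (fun j _ => by have := hAle j; have := (hIlam j).1; linarith)
    rw [Finset.sum_const, Finset.card_univ, Fintype.card_fin, nsmul_eq_mul] at h2
    have key : d - lam 1 ≤ 2 * (d - lam 1) / (lam (k + 1) - lam k) * (M - d) := by
      rw [div_mul_eq_mul_div, le_div_iff₀ hgap]
      nlinarith [mul_le_mul_of_nonneg_left hMd (sub_nonneg.mpr hd1)]
    have hnN' : (n : ℝ) ≤ N := by exact_mod_cast hnN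
    have hM1 : 0 ≤ M - lam 1 := by linarith
    nlinarith [mul_le_mul_of_nonneg_right hnN' hM1,
      mul_le_mul_of_nonneg_left key (show (0:ℝ) ≤ N by positivity)]
end

section
/- Let K, N, k, n be natural numbers with 1 ≤ n ≤ N ≤ k < K, and let λ : {1, …, K} → ℝ be nondecreasing with ε₀ := λ(k+1) − λ(k) > 0; set δ := (λ(k+1) + λ(k))/2. Then there exists a constant C ≥ 0, depending only on N, λ(1), λ(k), λ(k+1), with the following property. Let (A_j, I_j), j = 1, …, n, be pairs with 1 ≤ I_j ≤ N and N + 1 ≤ A_j ≤ K (the combined excitation ν), let s ⊆ {1, …, n} be a subset (the pairs of the excitation α) with complement sᶜ (the pairs of the excitation μ), and for a subset S define ε_S := Σ_{j∈S} (λ(A_j) − λ(I_j)). Assume α is external, i.e., A_j ≥ k + 1 for some j ∈ s. Then: (i) if μ is also external (A_j ≥ k + 1 for some j ∈ sᶜ), then ε_{{1,…,n}} ≤ C · ε_s · ε_{sᶜ}; (ii) if μ is not external (A_j ≤ k for all j ∈ sᶜ), then ε_{{1,…,n}} ≤ C · ε_s. -/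
/-- The key excitation-energy estimates (Lemma on ε_ν, ε_α, ε_μ): there exists a constant
`C ≥ 0`, depending only on `N, λ(1), λ(k), λ(k+1)`, such that for every external excitation
`ν` split into a necessarily external part `α` (indexed by `s`) and a part `μ` (indexed by
`sᶜ`), one has `ε_ν ≤ C·ε_α·ε_μ` if `μ` is external, and `ε_ν ≤ C·ε_α` if `μ` is not
external. -/
theorem excitation_energy_splitting_estimates
    (K N k : ℕ) (hNk : 1 ≤ N ∧ N ≤ k) (hkK : k < K)
    (lam : ℕ → ℝ) (hmono : ∀ i j, 1 ≤ i → i ≤ j → j ≤ K → lam i ≤ lam j)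
    (hgap : 0 < lam (k + 1) - lam k) :
    ∃ C : ℝ, 0 ≤ C ∧
      ∀ (n : ℕ), 1 ≤ n → n ≤ N →
      ∀ (A I : Fin n → ℕ),
        (∀ j, 1 ≤ I j ∧ I j ≤ N) → (∀ j, N + 1 ≤ A j ∧ A j ≤ K) →
      ∀ s : Finset (Fin n),
        (∃ j ∈ s, k + 1 ≤ A j) →
        ((∃ j ∈ sᶜ, k + 1 ≤ A j) →
          ∑ j, (lam (A j) - lam (I j))
            ≤ C * (∑ j ∈ s, (lam (A j) - lam (I j)))
                * (∑ j ∈ sᶜ, (lam (A j) - lam (I j)))) ∧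
        ((∀ j ∈ sᶜ, A j ≤ k) →
          ∑ j, (lam (A j) - lam (I j))
            ≤ C * (∑ j ∈ s, (lam (A j) - lam (I j)))) := by
  obtain ⟨hN1, hNk'⟩ := hNk
  set e0 : ℝ := lam (k + 1) - lam k with he0
  set M : ℝ := (N : ℝ) * (lam k - lam 1) with hMdef
  have hk1 : 1 ≤ k := le_trans hN1 hNk'
  have hk1K : k + 1 ≤ K := hkK
  have hkK' : k ≤ K := le_of_lt hkK
  have hMnn : 0 ≤ M := by
    have h1k : lam 1 ≤ lam k := hmono 1 k le_rfl hk1 hkK'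
    have : (0:ℝ) ≤ (N:ℝ) := Nat.cast_nonneg N
    nlinarith
  refine ⟨(2 + M + e0) / e0, div_nonneg (by linarith) hgap.le, ?_⟩
  intro n hn1 hnN A I hI hA s hsext
  -- every term is nonnegative
  have hterm : ∀ j : Fin n, 0 ≤ lam (A j) - lam (I j) := by
    intro j
    have h1 : 1 ≤ I j := (hI j).1
    have h2 : I j ≤ A j := le_trans (le_trans (hI j).2 (Nat.le_succ N)) (hA j).1
    have h3 : A j ≤ K := (hA j).2
    linarith [hmono (I j) (A j) h1 h2 h3]
  -- an external sum is at least e0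
  have hext : ∀ t : Finset (Fin n), (∃ j ∈ t, k + 1 ≤ A j) →
      e0 ≤ ∑ j ∈ t, (lam (A j) - lam (I j)) := by
    rintro t ⟨j, hjt, hjA⟩
    have h1 : lam (k + 1) ≤ lam (A j) :=
      hmono (k + 1) (A j) (by omega) hjA (hA j).2
    have h2 : lam (I j) ≤ lam k :=
      hmono (I j) k (hI j).1 (le_trans (hI j).2 hNk') hkK'
    calc e0 ≤ lam (A j) - lam (I j) := by simp only [he0]; linarith
      _ ≤ ∑ i ∈ t, (lam (A i) - lam (I i)) :=
          Finset.single_le_sum (fun i _ => hterm i) hjt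
  have ha := hext s hsext
  have hsplit : ∑ j, (lam (A j) - lam (I j))
      = (∑ j ∈ s, (lam (A j) - lam (I j))) + ∑ j ∈ sᶜ, (lam (A j) - lam (I j)) :=
    (Finset.sum_add_sum_compl s _).symm
  set a : ℝ := ∑ j ∈ s, (lam (A j) - lam (I j)) with hadef
  set b : ℝ := ∑ j ∈ sᶜ, (lam (A j) - lam (I j)) with hbdef
  have ha0 : 0 ≤ a := Finset.sum_nonneg fun i _ => hterm i
  have hb0 : 0 ≤ b := Finset.sum_nonneg fun i _ => hterm i
  constructor
  · intro hmu
    have hb := hext sᶜ hmu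
    rw [hsplit]
    have key : (a + b) * e0 ≤ (2 + M + e0) * (a * b) := by
      have h1 : e0 * a ≤ b * a := mul_le_mul_of_nonneg_right hb ha0
      have h2 : e0 * b ≤ a * b := mul_le_mul_of_nonneg_right ha hb0
      have h3 : 0 ≤ (M + e0) * (a * b) :=
        mul_nonneg (by linarith) (mul_nonneg ha0 hb0)
      nlinarith
    have : (2 + M + e0) / e0 * a * b = ((2 + M + e0) * (a * b)) / e0 := by ring
    rw [this, le_div_iff₀ hgap]
    linarith [key]
  · intro hmu
    -- each μ term is at most lam k - lam 1, so b ≤ M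
    have hbM : b ≤ M := by
      have hcard : (sᶜ.card : ℝ) ≤ (N : ℝ) := by
        have h1 : sᶜ.card ≤ n := Finset.card_le_card (Finset.subset_univ _) |>.trans
          (by simp [Finset.card_univ])
        exact_mod_cast le_trans h1 hnN
      have hone : ∀ j ∈ sᶜ, lam (A j) - lam (I j) ≤ lam k - lam 1 := by
        intro j hj
        have h1 : lam (A j) ≤ lam k :=
          hmono (A j) k (by have := (hA j).1; omega) (hmu j hj) hkK'
        have h2 : lam 1 ≤ lam (I j) :=
          hmono 1 (I j) le_rfl (hI j).1 (le_trans (le_trans (hI j).2 hNk') hkK')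
        linarith
      calc b ≤ sᶜ.card • (lam k - lam 1) := Finset.sum_le_card_nsmul _ _ _ hone
        _ = (sᶜ.card : ℝ) * (lam k - lam 1) := by simp [nsmul_eq_mul]
        _ ≤ M := by
            rw [hMdef]
            apply mul_le_mul_of_nonneg_right hcard
            linarith [hmono 1 k le_rfl hk1 hkK']
    rw [hsplit]
    have key : (a + b) * e0 ≤ (2 + M + e0) * a := by
      have h1 : b * e0 ≤ M * e0 := mul_le_mul_of_nonneg_right hbM hgap.le
      have h2 : M * e0 ≤ M * a := mul_le_mul_of_nonneg_left ha hMnn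
      nlinarith
    have : (2 + M + e0) / e0 * a = ((2 + M + e0) * a) / e0 := by ring
    rw [this, le_div_iff₀ hgap]
    linarith [key]
end

section
/- Let V be a real Hilbert space and V_d ⊆ V a subspace. Let a₁, a₂ : V × V → ℝ be bilinear forms and ℓ₁, ℓ₂ : V → ℝ linear functionals. Assume a₂ is coercive on V_d with constant γ > 0, i.e., a₂(v, v) ≥ γ‖v‖² for all v ∈ V_d. Suppose z̃_d ∈ V_d satisfies a₁(u, z̃_d) = ℓ₁(u) for all u ∈ V_d, and z_d ∈ V_d satisfies a₂(u, z_d) = ℓ₂(u) for all u ∈ V_d. If there are constants M₁, M₂ ≥ 0 with |ℓ₂(u) − ℓ₁(u)| ≤ M₁‖u‖ and |a₁(u, z̃_d) − a₂(u, z̃_d)| ≤ M₂‖u‖ for all u ∈ V_d, then γ‖z_d − z̃_d‖ ≤ M₁ + M₂. -/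
/-- Perturbation estimate for discrete dual (Lagrange multiplier) solutions: if `z̃_d`
solves the discrete dual problem for `(a₁, ℓ₁)` and `z_d` the one for `(a₂, ℓ₂)`, `a₂` is
coercive on the subspace `V_d` with constant `γ`, and the data differ by `M₁` resp. `M₂`,
then `γ‖z_d − z̃_d‖ ≤ M₁ + M₂`. -/
theorem dual_solution_perturbation
    {V : Type*} [NormedAddCommGroup V] [InnerProductSpace ℝ V] [CompleteSpace V]
    (Vd : Submodule ℝ V)
    (a₁ a₂ : V →ₗ[ℝ] V →ₗ[ℝ] ℝ) (ℓ₁ ℓ₂ : V →ₗ[ℝ] ℝ)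
    (γ : ℝ) (hγ : 0 < γ)
    (hcoer : ∀ v ∈ Vd, γ * ‖v‖ ^ 2 ≤ a₂ v v)
    (ztilde : V) (hztilde : ztilde ∈ Vd)
    (hztilde_sol : ∀ u ∈ Vd, a₁ u ztilde = ℓ₁ u)
    (zd : V) (hzd : zd ∈ Vd)
    (hzd_sol : ∀ u ∈ Vd, a₂ u zd = ℓ₂ u)
    (M₁ M₂ : ℝ) (hM₁ : 0 ≤ M₁) (hM₂ : 0 ≤ M₂)
    (hℓ : ∀ u ∈ Vd, |ℓ₂ u - ℓ₁ u| ≤ M₁ * ‖u‖)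
    (ha : ∀ u ∈ Vd, |a₁ u ztilde - a₂ u ztilde| ≤ M₂ * ‖u‖) :
    γ * ‖zd - ztilde‖ ≤ M₁ + M₂ := by
  set e := zd - ztilde with he
  have heVd : e ∈ Vd := Vd.sub_mem hzd hztilde
  by_cases h0 : e = 0
  · simp [h0]; positivity
  have hne : (0:ℝ) < ‖e‖ := norm_pos_iff.mpr h0
  have key : γ * ‖e‖ ^ 2 ≤ (M₁ + M₂) * ‖e‖ := by
    have h1 := hcoer e heVd
    have h2 : a₂ e e = (ℓ₂ e - ℓ₁ e) + (a₁ e ztilde - a₂ e ztilde) := by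
      have : a₂ e e = a₂ e zd - a₂ e ztilde := by simp [he, map_sub]
      rw [this, hzd_sol e heVd, hztilde_sol e heVd]; ring
    calc γ * ‖e‖ ^ 2 ≤ a₂ e e := h1
      _ = (ℓ₂ e - ℓ₁ e) + (a₁ e ztilde - a₂ e ztilde) := h2
      _ ≤ |ℓ₂ e - ℓ₁ e| + |a₁ e ztilde - a₂ e ztilde| :=
          add_le_add (le_abs_self _) (le_abs_self _)
      _ ≤ M₁ * ‖e‖ + M₂ * ‖e‖ := add_le_add (hℓ e heVd) (ha e heVd)
      _ = (M₁ + M₂) * ‖e‖ := by ring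
  have := le_of_mul_le_mul_right (by nlinarith : γ * ‖e‖ * ‖e‖ ≤ (M₁ + M₂) * ‖e‖) hne
  linarith
end

section
/- Let V be a real Hilbert space, let E : V → ℝ and f : V → V be three times continuously differentiable, and let V_d ⊆ V be a subspace. Suppose (t*, z*) ∈ V × V satisfies f(t*) = 0 and E'(t*)(u) = ⟨f'(t*)(u), z*⟩ for all u ∈ V, and (t_d, z_d) ∈ V_d × V_d satisfies ⟨f(t_d), v⟩ = 0 and E'(t_d)(v) = ⟨f'(t_d)(v), z_d⟩ for all v ∈ V_d. Define the primal residual ρ(t_d)(u) = −⟨f(t_d), u⟩ and the dual residual ρ*(t_d, z_d)(u) = E'(t_d)(u) − ⟨f'(t_d)(u), z_d⟩, and set e = t* − t_d, e* = z* − z_d. Then for all v_d, w_d ∈ V_d: 2(E(t*) − E(t_d)) = R + ρ(t_d)(z* − v_d) + ρ*(t_d, z_d)(t* − w_d), where R = ∫₀¹ [ E'''(t_d + s·e)(e, e, e) − ⟨f'''(t_d + s·e)(e, e, e), z_d + s·e*⟩ − 3⟨f''(t_d + s·e)(e, e), e*⟩ ] · s(s − 1) ds, with E''', f'', f''' denoting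 the second and third Fréchet derivatives (multilinear maps) of E and f. -/
open RealInnerProductSpace

namespace BRaux

variable {V : Type*} [NormedAddCommGroup V] [InnerProductSpace ℝ V]

omit [NormedAddCommGroup V] [InnerProductSpace ℝ V] in
lemma cons_const (e : V) (n : ℕ) :
    (Fin.cons e (fun _ : Fin n => e) : Fin (n + 1) → V) = fun _ => e := by
  funext i
  refine Fin.cases rfl (fun j => ?_) i
  simp

lemma key_deriv {W : Type*} [NormedAddCommGroup W] [NormedSpace ℝ W]
    (F : V → W) (n : ℕ) (hn : (n : WithTop ℕ∞) < 3) (hF : ContDiff ℝ 3 F)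
    (x v : V) (m : Fin n → V) (s : ℝ) :
    HasDerivAt (fun s : ℝ => iteratedFDeriv ℝ n F (x + s • v) m)
      (iteratedFDeriv ℝ (n + 1) F (x + s • v) (Fin.cons v m)) s := by
  have hc : HasDerivAt (fun s : ℝ => x + s • v) v s := by
    simpa using ((hasDerivAt_id s).smul_const v).const_add x
  have hd := ((hF.differentiable_iteratedFDeriv hn) (x + s • v)).hasFDerivAt
  have h1 : HasDerivAt (fun s : ℝ => iteratedFDeriv ℝ n F (x + s • v))
      (fderiv ℝ (iteratedFDeriv ℝ n F) (x + s • v) v) s := hd.comp_hasDerivAt s hc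
  exact ((ContinuousMultilinearMap.apply ℝ (fun _ : Fin n => V) W m).hasFDerivAt).comp_hasDerivAt
    s h1

lemma key_deriv' {W : Type*} [NormedAddCommGroup W] [NormedSpace ℝ W]
    (F : V → W) (n : ℕ) (hn : (n : WithTop ℕ∞) < 3) (hF : ContDiff ℝ 3 F)
    (x v : V) (s : ℝ) :
    HasDerivAt (fun s : ℝ => iteratedFDeriv ℝ n F (x + s • v) (fun _ => v))
      (iteratedFDeriv ℝ (n + 1) F (x + s • v) (fun _ => v)) s := by
  have := key_deriv F n hn hF x v (fun _ => v) s
  rwa [cons_const] at this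

variable (E : V → ℝ) (f : V → V) (td e zd ee : V)

noncomputable def g (s : ℝ) : ℝ :=
  E (td + s • e) - ⟪f (td + s • e), zd + s • ee⟫

noncomputable def g1 (s : ℝ) : ℝ :=
  iteratedFDeriv ℝ 1 E (td + s • e) (fun _ => e)
    - ⟪iteratedFDeriv ℝ 1 f (td + s • e) (fun _ => e), zd + s • ee⟫
    - ⟪f (td + s • e), ee⟫

noncomputable def g2 (s : ℝ) : ℝ :=
  iteratedFDeriv ℝ 2 E (td + s • e) (fun _ => e)
    - ⟪iteratedFDeriv ℝ 2 f (td + s • e) (fun _ => e), zd + s • ee⟫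
    - 2 * ⟪iteratedFDeriv ℝ 1 f (td + s • e) (fun _ => e), ee⟫

noncomputable def g3 (s : ℝ) : ℝ :=
  iteratedFDeriv ℝ 3 E (td + s • e) (fun _ => e)
    - ⟪iteratedFDeriv ℝ 3 f (td + s • e) (fun _ => e), zd + s • ee⟫
    - 3 * ⟪iteratedFDeriv ℝ 2 f (td + s • e) (fun _ => e), ee⟫

variable {E f}

lemma hz (s : ℝ) : HasDerivAt (fun s : ℝ => zd + s • ee) ee s := by
  simpa using ((hasDerivAt_id s).smul_const ee).const_add zd

lemma hasDerivAt_g (hE : ContDiff ℝ 3 E) (hf : ContDiff ℝ 3 f) (s : ℝ) :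
    HasDerivAt (g E f td e zd ee) (g1 E f td e zd ee s) s := by
  have dE : HasDerivAt (fun s : ℝ => E (td + s • e))
      (iteratedFDeriv ℝ 1 E (td + s • e) (fun _ => e)) s := by
    have := key_deriv' E 0 (by norm_num) hE td e s
    simpa [iteratedFDeriv_zero_apply] using this
  have dF : HasDerivAt (fun s : ℝ => f (td + s • e))
      (iteratedFDeriv ℝ 1 f (td + s • e) (fun _ => e)) s := by
    have := key_deriv' f 0 (by norm_num) hf td e s
    simpa [iteratedFDeriv_zero_apply] using this
  have dI := HasDerivAt.inner ℝ dF (hz zd ee s)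
  have := dE.sub dI
  exact this.congr_deriv (by simp [g1]; ring)

lemma hasDerivAt_g1 (hE : ContDiff ℝ 3 E) (hf : ContDiff ℝ 3 f) (s : ℝ) :
    HasDerivAt (g1 E f td e zd ee) (g2 E f td e zd ee s) s := by
  have dA := key_deriv' E 1 (by norm_num) hE td e s
  have dB := key_deriv' f 1 (by norm_num) hf td e s
  have dF : HasDerivAt (fun s : ℝ => f (td + s • e))
      (iteratedFDeriv ℝ 1 f (td + s • e) (fun _ => e)) s := by
    have := key_deriv' f 0 (by norm_num) hf td e s
    simpa [iteratedFDeriv_zero_apply] using this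
  have dI := HasDerivAt.inner ℝ dB (hz zd ee s)
  have dJ := HasDerivAt.inner ℝ dF (hasDerivAt_const s ee)
  have := (dA.sub dI).sub dJ
  exact this.congr_deriv (by simp [g2]; ring)

lemma hasDerivAt_g2 (hE : ContDiff ℝ 3 E) (hf : ContDiff ℝ 3 f) (s : ℝ) :
    HasDerivAt (g2 E f td e zd ee) (g3 E f td e zd ee s) s := by
  have dA := key_deriv' E 2 (by norm_num) hE td e s
  have dB := key_deriv' f 2 (by norm_num) hf td e s
  have dB1 := key_deriv' f 1 (by norm_num) hf td e s
  have dI := HasDerivAt.inner ℝ dB (hz zd ee s)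
  have dJ := (HasDerivAt.inner ℝ dB1 (hasDerivAt_const s ee)).const_mul (2 : ℝ)
  have := (dA.sub dI).sub dJ
  exact this.congr_deriv (by simp [g3]; ring)

lemma continuous_g3 (hE : ContDiff ℝ 3 E) (hf : ContDiff ℝ 3 f) :
    Continuous (g3 E f td e zd ee) := by
  have hc : Continuous (fun s : ℝ => td + s • e) :=
    continuous_const.add (continuous_id.smul continuous_const)
  have hz : Continuous (fun s : ℝ => zd + s • ee) :=
    continuous_const.add (continuous_id.smul continuous_const)
  have hA : Continuous (fun s : ℝ => iteratedFDeriv ℝ 3 E (td + s • e) (fun _ => e)) :=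
    (ContinuousMultilinearMap.apply ℝ (fun _ : Fin 3 => V) ℝ (fun _ => e)).continuous.comp
      ((hE.continuous_iteratedFDeriv le_rfl).comp hc)
  have hB : Continuous (fun s : ℝ => iteratedFDeriv ℝ 3 f (td + s • e) (fun _ => e)) :=
    (ContinuousMultilinearMap.apply ℝ (fun _ : Fin 3 => V) V (fun _ => e)).continuous.comp
      ((hf.continuous_iteratedFDeriv le_rfl).comp hc)
  have hB2 : Continuous (fun s : ℝ => iteratedFDeriv ℝ 2 f (td + s • e) (fun _ => e)) :=
    (ContinuousMultilinearMap.apply ℝ (fun _ : Fin 2 => V) V (fun _ => e)).continuous.comp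
      ((hf.continuous_iteratedFDeriv (by norm_num)).comp hc)
  exact (hA.sub (hB.inner hz)).sub (continuous_const.mul (hB2.inner continuous_const))

lemma trapezoid (hE : ContDiff ℝ 3 E) (hf : ContDiff ℝ 3 f) :
    ∫ s in (0:ℝ)..1, g3 E f td e zd ee s * (s * (s - 1)) =
      2 * (g E f td e zd ee 1 - g E f td e zd ee 0)
        - g1 E f td e zd ee 1 - g1 E f td e zd ee 0 := by
  have hH : ∀ s ∈ Set.uIcc (0:ℝ) 1, HasDerivAt
      (fun s => g2 E f td e zd ee s * (s ^ 2 - s) - g1 E f td e zd ee s * (2 * s - 1)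
        + 2 * g E f td e zd ee s)
      (g3 E f td e zd ee s * (s * (s - 1))) s := by
    intro s _
    have hq : HasDerivAt (fun s : ℝ => s ^ 2 - s) (2 * s - 1) s := by
      exact ((hasDerivAt_pow 2 s).sub (hasDerivAt_id s)).congr_deriv (by simp)
    have hl : HasDerivAt (fun s : ℝ => 2 * s - 1) 2 s := by
      simpa using ((hasDerivAt_id s).const_mul (2:ℝ)).sub_const 1
    have d1 := (hasDerivAt_g2 td e zd ee hE hf s).mul hq
    have d2 := (hasDerivAt_g1 td e zd ee hE hf s).mul hl
    have d3 := (hasDerivAt_g td e zd ee hE hf s).const_mul (2 : ℝ)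
    have := (d1.sub d2).add d3
    exact this.congr_deriv (by ring)
  have hint : IntervalIntegrable (fun s => g3 E f td e zd ee s * (s * (s - 1)))
      MeasureTheory.volume 0 1 :=
    ((continuous_g3 td e zd ee hE hf).mul (by continuity)).intervalIntegrable 0 1
  have := intervalIntegral.integral_eq_sub_of_hasDerivAt hH hint
  rw [this]
  ring

end BRaux

/-- Bangerth–Rannacher error representation for nonlinear Galerkin schemes:
`2(E(t*) − E(t_d)) = R + ρ(t_d)(z* − v_d) + ρ*(t_d, z_d)(t* − w_d)` for all
`v_d, w_d ∈ V_d`, with the cubic remainder `R` expressed as an integral of third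
derivatives along the segment from `t_d` to `t*`. -/
theorem bangerth_rannacher_error_representation
    {V : Type*} [NormedAddCommGroup V] [InnerProductSpace ℝ V] [CompleteSpace V]
    (E : V → ℝ) (f : V → V) (hE : ContDiff ℝ 3 E) (hf : ContDiff ℝ 3 f)
    (Vd : Submodule ℝ V)
    (tstar zstar td zd : V)
    (hprimal : f tstar = 0)
    (hdual : ∀ u : V, fderiv ℝ E tstar u = ⟪fderiv ℝ f tstar u, zstar⟫)
    (htd : td ∈ Vd) (hzd : zd ∈ Vd)
    (hprimal_d : ∀ v ∈ Vd, ⟪f td, v⟫ = 0)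
    (hdual_d : ∀ v ∈ Vd, fderiv ℝ E td v = ⟪fderiv ℝ f td v, zd⟫) :
    ∀ vd ∈ Vd, ∀ wd ∈ Vd,
      2 * (E tstar - E td) =
        (∫ s in (0:ℝ)..1,
          (iteratedFDeriv ℝ 3 E (td + s • (tstar - td))
              ![tstar - td, tstar - td, tstar - td]
            - ⟪iteratedFDeriv ℝ 3 f (td + s • (tstar - td))
                ![tstar - td, tstar - td, tstar - td], zd + s • (zstar - zd)⟫
            - 3 * ⟪iteratedFDeriv ℝ 2 f (td + s • (tstar - td))
                ![tstar - td, tstar - td], zstar - zd⟫) * (s * (s - 1)))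
        + (-⟪f td, zstar - vd⟫)
        + (fderiv ℝ E td (tstar - wd) - ⟪fderiv ℝ f td (tstar - wd), zd⟫) := by
  intro vd hvd wd hwd
  set e := tstar - td with he
  set ee := zstar - zd with hee
  have hv3 : (![e, e, e] : Fin 3 → V) = fun _ => e := by
    funext i; fin_cases i <;> rfl
  have hv2 : (![e, e] : Fin 2 → V) = fun _ => e := by
    funext i; fin_cases i <;> rfl
  have hgoal_int : (∫ s in (0:ℝ)..1,
      (iteratedFDeriv ℝ 3 E (td + s • e) ![e, e, e]
        - ⟪iteratedFDeriv ℝ 3 f (td + s • e) ![e, e, e], zd + s • ee⟫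
        - 3 * ⟪iteratedFDeriv ℝ 2 f (td + s • e) ![e, e], ee⟫) * (s * (s - 1)))
      = ∫ s in (0:ℝ)..1, BRaux.g3 E f td e zd ee s * (s * (s - 1)) := by
    rw [hv3, hv2]; rfl
  rw [hgoal_int, BRaux.trapezoid td e zd ee hE hf]
  -- evaluate g and g1 at endpoints
  have hc1 : td + e = tstar := by rw [he]; abel
  have hz1 : zd + ee = zstar := by rw [hee]; abel
  have hg1v : BRaux.g E f td e zd ee 1 = E tstar := by
    simp [BRaux.g, hc1, hz1, hprimal]
  have hg0v : BRaux.g E f td e zd ee 0 = E td := by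
    simp [BRaux.g, hprimal_d zd hzd]
  have hg1'1 : BRaux.g1 E f td e zd ee 1 = 0 := by
    simp [BRaux.g1, hc1, hz1, hprimal, iteratedFDeriv_one_apply, hdual e]
  have hg1'0 : BRaux.g1 E f td e zd ee 0 =
      (-⟪f td, zstar - vd⟫) + (fderiv ℝ E td (tstar - wd) - ⟪fderiv ℝ f td (tstar - wd), zd⟫) := by
    have h1 : fderiv ℝ E td (td - wd) = ⟪fderiv ℝ f td (td - wd), zd⟫ :=
      hdual_d _ (Vd.sub_mem htd hwd)
    have h2 : ⟪f td, zd - vd⟫ = 0 := hprimal_d _ (Vd.sub_mem hzd hvd)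
    simp only [map_sub, inner_sub_left, inner_sub_right] at h1 h2 ⊢
    simp only [BRaux.g1, zero_smul, add_zero, iteratedFDeriv_one_apply]
    simp only [he, hee, map_sub, inner_sub_left, inner_sub_right]
    linarith
  rw [hg1v, hg0v, hg1'1, hg1'0]
  ring
end
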